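/- Let 𝒮 be a finite state space and P̂ an irreducible stochastic matrix on 𝒮. For a nonempty subset W ⊆ 𝒮, a W-graph is a function g assigning to each state in 𝒮∖W exactly one outgoing arrow (to a different state) such that the resulting directed graph has no cycles (equivalently, from every state in 𝒮∖W there is a directed path into W). With ϖ(g) = Π_{(s→s')∈g} P̂_{ss'} and R_s = Σ_{g ∈ 𝒢{s}} ϖ(g), the unique stationary distribution π of P̂ satisfies π_s = R_s / Σ_{s'∈𝒮} R_{s'} for every s ∈ 𝒮. -/

import Mathlib

open scoped Classical

/-- A `{s}`-graph (arborescence rooted at `s`): every state other than `s` has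
exactly one outgoing arrow (encoded by the function `g`, canonically fixing `s`),
arrows go to different states, and there are no cycles — equivalently, from every
state the iterates of `g` lead into `s`. -/
def IsWGraph {S : Type*} (s : S) (g : S → S) : Prop :=
  g s = s ∧ (∀ x, x ≠ s → g x ≠ x) ∧ ∀ x, ∃ k : ℕ, g^[k] x = s

/-- Product of transition probabilities along the arrows of the graph `g`. -/
def graphWeight {S : Type*} [Fintype S] [DecidableEq S]
    (P : Matrix S S ℝ) (s : S) (g : S → S) : ℝ :=
  ∏ x ∈ Finset.univ.erase s, P x (g x)

/-- `R_s`: sum of the weights of all `{s}`-graphs. -/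
noncomputable def treeSum {S : Type*} [Fintype S] [DecidableEq S]
    (P : Matrix S S ℝ) (s : S) : ℝ :=
  ∑ g ∈ Finset.univ.filter (fun g : S → S => IsWGraph s g), graphWeight P s g

namespace FWaux

variable {S : Type*}

lemma iterate_agree (f₁ f₂ : S → S) (a : S)
    (hag : ∀ y, y ≠ a → f₂ y = f₁ y) :
    ∀ (k : ℕ) (x : S), (∀ i, i < k → f₁^[i] x ≠ a) → f₂^[k] x = f₁^[k] x := by
  intro k
  induction k with
  | zero => intro x _; rfl
  | succ n ih =>
    intro x hx
    rw [Function.iterate_succ_apply, Function.iterate_succ_apply]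
    have hx0 : x ≠ a := by simpa using hx 0 (Nat.succ_pos n)
    rw [hag x hx0]
    exact ih (f₁ x) fun i hi => by
      have := hx (i + 1) (Nat.succ_lt_succ hi)
      rwa [Function.iterate_succ_apply] at this

lemma min_hit (f : S → S) (x a : S) (h : ∃ k, f^[k] x = a) :
    ∃ k, f^[k] x = a ∧ ∀ i, i < k → f^[i] x ≠ a :=
  ⟨Nat.find h, Nat.find_spec h, fun i hi => Nat.find_min h hi⟩

lemma reach_transfer (f₁ f₂ : S → S) (a : S) (hag : ∀ y, y ≠ a → f₂ y = f₁ y)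
    (x : S) (h : ∃ k, f₁^[k] x = a) : ∃ k, f₂^[k] x = a := by
  obtain ⟨k, hk, hmin⟩ := min_hit f₁ x a h
  exact ⟨k, by rw [iterate_agree f₁ f₂ a hag k x hmin, hk]⟩

lemma iterate_mul_fixed (f : S → S) (y : S) (k : ℕ) (hk : f^[k] y = y) :
    ∀ q, f^[k * q] y = y := by
  intro q
  induction q with
  | zero => rfl
  | succ n ih =>
    have : k * (n + 1) = k * n + k := by ring
    rw [this, Function.iterate_add_apply, hk, ih]

lemma iterate_mod (f : S → S) (y : S) (k : ℕ) (hk : f^[k] y = y) (n : ℕ) :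
    f^[n] y = f^[n % k] y := by
  conv_lhs => rw [← Nat.mod_add_div n k]
  rw [Function.iterate_add_apply, iterate_mul_fixed f y k hk]

variable [DecidableEq S]

lemma update_apply_eq (f : S → S) (a b : S) (h : f a = b) :
    Function.update f a b = f := h ▸ Function.update_eq_self a f

/-- The predecessor of `s'` on the unique cycle of `h`. -/
noncomputable def cycPred (s' : S) (h : S → S) : S :=
  if hh : ∃ m, h^[m + 1] s' = s' then h^[Nat.find hh] s' else s'

lemma cycPred_eq {s' : S} {h : S → S} (hh : ∃ m, h^[m + 1] s' = s') :
    cycPred s' h = h^[Nat.find hh] s' := dif_pos hh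

lemma cycPred_self {s' : S} {h : S → S} (hh : ∃ m, h^[m + 1] s' = s') :
    h (cycPred s' h) = s' := by
  rw [cycPred_eq hh]
  have := Nat.find_spec hh
  rwa [Function.iterate_succ_apply'] at this

/-- Existence of a return to `s'` for `update g s s'` when `g` is an `s`-arborescence. -/
lemma cyc_exists (s s' : S) (g : S → S) (hg : IsWGraph s g) :
    ∃ m, (Function.update g s s')^[m + 1] s' = s' := by
  set h := Function.update g s s' with hh
  have hag : ∀ y, y ≠ s → h y = g y := fun y hy => Function.update_of_ne hy _ _
  obtain ⟨j, hj, hjmin⟩ := min_hit g s' s (hg.2.2 s')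
  have hagree : h^[j] s' = g^[j] s' := iterate_agree g h s hag j s' hjmin
  have hs : h s = s' := Function.update_self s s' g
  exact ⟨j, by rw [Function.iterate_succ_apply', hagree, hj, hs]⟩

/-- The cycle predecessor of `s'` in `update g s s'` is `s` itself. -/
lemma cycPred_update (s s' : S) (g : S → S) (hg : IsWGraph s g) :
    cycPred s' (Function.update g s s') = s := by
  set h := Function.update g s s' with hdef
  have hh : ∃ m, h^[m + 1] s' = s' := cyc_exists s s' g hg
  rw [cycPred_eq hh]
  have hag : ∀ y, y ≠ s → h y = g y := fun y hy => Function.update_of_ne hy _ _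
  obtain ⟨j, hj, hjmin⟩ := min_hit g s' s (hg.2.2 s')
  have hagree : ∀ i, i ≤ j → h^[i] s' = g^[i] s' := fun i hi =>
    iterate_agree g h s hag i s' (fun l hl => hjmin l (lt_of_lt_of_le hl hi))
  have hs : h s = s' := Function.update_self s s' g
  have hj1 : h^[j + 1] s' = s' := by
    rw [Function.iterate_succ_apply', hagree j le_rfl, hj, hs]
  have hle : Nat.find hh ≤ j := Nat.find_le hj1
  rcases eq_or_lt_of_le hle with heq | hlt
  · rw [heq, hagree j le_rfl, hj]
  · exfalso
    have hm1 : h^[Nat.find hh + 1] s' = s' := Nat.find_spec hh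
    have hg1 : g^[Nat.find hh + 1] s' = s' := by
      rw [← hagree (Nat.find hh + 1) (by omega), hm1]
    set k := Nat.find hh + 1 with hkdef
    have hk1 : 1 ≤ k := by omega
    have hkj : k ≤ j := by omega
    have : g^[j] s' = g^[j % k] s' := iterate_mod g s' k hg1 j
    have hmodlt : j % k < j := lt_of_lt_of_le (Nat.mod_lt _ (by omega)) hkj
    exact hjmin (j % k) hmodlt (by rw [← this, hj])



variable {S : Type*} [Fintype S] [DecidableEq S]

/-- `h` is a "cycle graph through `s'`": from every state, some positive iterate hits `s'`. -/
def ToCyc (s' : S) (h : S → S) : Prop := ∀ x, ∃ k : ℕ, h^[k + 1] x = s'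

lemma weight_update (P : Matrix S S ℝ) (s t : S) (g : S → S) :
    graphWeight P s g * P s t = ∏ x, P x (Function.update g s t x) := by
  rw [← Finset.prod_erase_mul Finset.univ _ (Finset.mem_univ s), Function.update_self]
  congr 1
  refine Finset.prod_congr rfl fun x hx => ?_
  rw [Function.update_of_ne (Finset.ne_of_mem_erase hx)]

lemma fw_B (P : Matrix S S ℝ) (hrow : ∀ s, ∑ t, P s t = 1) (s' : S) :
    treeSum P s' =
      ∑ h ∈ Finset.univ.filter (fun h : S → S => ToCyc s' h), ∏ x, P x (h x) := by
  have step1 : treeSum P s' =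
      ∑ p ∈ (Finset.univ.filter (fun g : S → S => IsWGraph s' g)) ×ˢ Finset.univ,
        graphWeight P s' p.1 * P s' p.2 := by
    rw [Finset.sum_product, treeSum]
    refine Finset.sum_congr rfl fun g _ => ?_
    dsimp only
    rw [← Finset.mul_sum, hrow s', mul_one]
  rw [step1]
  refine Finset.sum_nbij' (fun p => Function.update p.1 s' p.2)
    (fun h => (Function.update h s' s', h s')) ?_ ?_ ?_ ?_ ?_
  · rintro ⟨g, t⟩ hp
    dsimp only at hp ⊢
    rw [Finset.mem_product, Finset.mem_filter] at hp
    obtain ⟨⟨-, hg⟩, -⟩ := hp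
    rw [Finset.mem_filter]
    refine ⟨Finset.mem_univ _, fun x => ?_⟩
    have hag : ∀ y, y ≠ s' → Function.update g s' t y = g y :=
      fun y hy => Function.update_of_ne hy _ _
    have hs : Function.update g s' t s' = t := Function.update_self s' t g
    obtain ⟨k, hk, hkmin⟩ := min_hit g x s' (hg.2.2 x)
    rcases Nat.eq_zero_or_pos k with rfl | hkpos
    · have hxs : x = s' := hk
      obtain ⟨k', hk', hmin'⟩ := min_hit g t s' (hg.2.2 t)
      have hagr : (Function.update g s' t)^[k'] t = s' := by
        rw [iterate_agree g (Function.update g s' t) s' hag k' t hmin', hk']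
      exact ⟨k', by rw [Function.iterate_succ_apply, hxs, hs, hagr]⟩
    · obtain ⟨m, rfl⟩ := Nat.exists_eq_succ_of_ne_zero (Nat.pos_iff_ne_zero.mp hkpos)
      exact ⟨m, by rw [iterate_agree g (Function.update g s' t) s' hag (m + 1) x hkmin, hk]⟩
  · intro h hhmem
    rw [Finset.mem_filter] at hhmem
    obtain ⟨-, hcyc⟩ := hhmem
    rw [Finset.mem_product, Finset.mem_filter]
    refine ⟨⟨Finset.mem_univ _, ?_, ?_, ?_⟩, Finset.mem_univ _⟩
    · exact Function.update_self s' s' h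
    · intro x hx
      dsimp only at hx ⊢
      rw [Function.update_of_ne hx]
      intro hfix
      obtain ⟨k, hk⟩ := hcyc x
      rw [Function.iterate_fixed hfix] at hk
      exact hx hk
    · intro x
      obtain ⟨k, hk⟩ := hcyc x
      exact reach_transfer h (Function.update h s' s') s'
        (fun y hy => Function.update_of_ne hy _ _) x ⟨k + 1, hk⟩
  · rintro ⟨g, t⟩ hp
    dsimp only at hp ⊢
    rw [Finset.mem_product, Finset.mem_filter] at hp
    obtain ⟨⟨-, hg⟩, -⟩ := hp
    have h1 : Function.update (Function.update g s' t) s' s' = g := by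
      rw [Function.update_idem]
      exact update_apply_eq g s' s' hg.1
    have h2 : Function.update g s' t s' = t := Function.update_self s' t g
    rw [h1, h2]
  · intro h hhmem
    dsimp only
    rw [Function.update_idem]
    exact update_apply_eq h s' (h s') rfl
  · rintro ⟨g, t⟩ _
    exact weight_update P s' t g

lemma fw_A (P : Matrix S S ℝ) (s' : S) :
    ∑ s, treeSum P s * P s s' =
      ∑ h ∈ Finset.univ.filter (fun h : S → S => ToCyc s' h), ∏ x, P x (h x) := by
  have step1 : ∑ s, treeSum P s * P s s' =
      ∑ p ∈ Finset.univ.filter (fun p : S × (S → S) => IsWGraph p.1 p.2),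
        graphWeight P p.1 p.2 * P p.1 s' := by
    rw [Finset.sum_filter, ← Finset.univ_product_univ, Finset.sum_product]
    refine Finset.sum_congr rfl fun s _ => ?_
    rw [treeSum, Finset.sum_mul, Finset.sum_filter]
  rw [step1]
  refine Finset.sum_nbij' (fun p => Function.update p.2 p.1 s')
    (fun h => (cycPred s' h, Function.update h (cycPred s' h) (cycPred s' h))) ?_ ?_ ?_ ?_ ?_
  · rintro ⟨s, g⟩ hp
    dsimp only at hp ⊢
    rw [Finset.mem_filter] at hp
    obtain ⟨-, hg⟩ := hp
    rw [Finset.mem_filter]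
    refine ⟨Finset.mem_univ _, fun x => ?_⟩
    have hag : ∀ y, y ≠ s → Function.update g s s' y = g y :=
      fun y hy => Function.update_of_ne hy _ _
    have hs : Function.update g s s' s = s' := Function.update_self s s' g
    obtain ⟨k, hk, hkmin⟩ := min_hit g x s (hg.2.2 x)
    refine ⟨k, ?_⟩
    rw [Function.iterate_succ_apply', iterate_agree g (Function.update g s s') s hag k x hkmin,
      hk, hs]
  · intro h hhmem
    rw [Finset.mem_filter] at hhmem
    obtain ⟨-, hcyc⟩ := hhmem
    have hh : ∃ m, h^[m + 1] s' = s' := hcyc s'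
    have hs : h (cycPred s' h) = s' := cycPred_self hh
    rw [Finset.mem_filter]
    refine ⟨Finset.mem_univ _, Function.update_self _ _ h, ?_, ?_⟩
    · intro x hx
      dsimp only at hx ⊢
      rw [Function.update_of_ne hx]
      intro hfix
      have hx' : x = s' := by
        obtain ⟨k, hk⟩ := hcyc x
        rwa [Function.iterate_fixed hfix] at hk
      subst hx'
      have h0 : h^[0 + 1] x = x := by simpa using hfix
      have hfind : Nat.find hh = 0 := Nat.le_zero.mp (Nat.find_le h0)
      exact hx (by rw [cycPred_eq hh, hfind]; rfl)
    · intro x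
      have hreach : ∃ k, h^[k] x = cycPred s' h := by
        obtain ⟨k₁, hk₁⟩ := hcyc x
        refine ⟨Nat.find hh + (k₁ + 1), ?_⟩
        rw [Function.iterate_add_apply, hk₁, cycPred_eq hh]
      exact reach_transfer h (Function.update h (cycPred s' h) (cycPred s' h)) (cycPred s' h)
        (fun y hy => Function.update_of_ne hy _ _) x hreach
  · rintro ⟨s, g⟩ hp
    dsimp only at hp ⊢
    rw [Finset.mem_filter] at hp
    obtain ⟨-, hg⟩ := hp
    have h1 : cycPred s' (Function.update g s s') = s := cycPred_update s s' g hg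
    rw [h1, Function.update_idem]
    rw [update_apply_eq g s s hg.1]
  · intro h hhmem
    dsimp only
    rw [Finset.mem_filter] at hhmem
    obtain ⟨-, hcyc⟩ := hhmem
    have hh : ∃ m, h^[m + 1] s' = s' := hcyc s'
    rw [Function.update_idem]
    exact update_apply_eq h _ s' (cycPred_self hh)
  · rintro ⟨s, g⟩ _
    exact weight_update P s s' g


lemma pow_nonneg' (P : Matrix S S ℝ) (hnonneg : ∀ s t, 0 ≤ P s t) :
    ∀ (n : ℕ) (x y : S), 0 ≤ (P ^ n) x y := by
  intro n
  induction n with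
  | zero => intro x y; simp [Matrix.one_apply]; split <;> norm_num
  | succ n ih =>
    intro x y
    rw [pow_succ, Matrix.mul_apply]
    exact Finset.sum_nonneg fun z _ => mul_nonneg (ih x z) (hnonneg z y)

lemma treeSum_pos (P : Matrix S S ℝ) (hnonneg : ∀ s t, 0 ≤ P s t)
    (hirr : ∀ s t, ∃ n : ℕ, 0 < (P ^ n) s t) (s₀ : S) : 0 < treeSum P s₀ := by
  set d : S → ℕ := fun x => Nat.find (hirr x s₀) with hd
  have hd0 : ∀ x, d x = 0 → x = s₀ := by
    intro x hx
    have hspec : 0 < (P ^ d x) x s₀ := Nat.find_spec (hirr x s₀)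
    rw [hx, pow_zero, Matrix.one_apply] at hspec
    by_contra hne
    rw [if_neg hne] at hspec
    exact lt_irrefl 0 hspec
  have step : ∀ x, x ≠ s₀ → ∃ y, 0 < P x y ∧ d y < d x := by
    intro x hx
    have hdx : d x ≠ 0 := fun h => hx (hd0 x h)
    obtain ⟨k, hk⟩ := Nat.exists_eq_succ_of_ne_zero hdx
    have hspec : 0 < (P ^ (k + 1)) x s₀ := by
      have := Nat.find_spec (hirr x s₀)
      rw [show Nat.find (hirr x s₀) = k + 1 from hk] at this
      exact this
    rw [pow_succ', Matrix.mul_apply] at hspec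
    obtain ⟨y, hy⟩ : ∃ y, 0 < P x y * (P ^ k) y s₀ := by
      by_contra hc
      push_neg at hc
      have : ∑ y, P x y * (P ^ k) y s₀ ≤ 0 := Finset.sum_nonpos fun y _ => hc y
      linarith
    have h1 : 0 < P x y := by
      rcases mul_pos_iff.mp hy with ⟨h1, _⟩ | ⟨h1, _⟩
      · exact h1
      · linarith [hnonneg x y]
    have h2 : 0 < (P ^ k) y s₀ := by
      rcases mul_pos_iff.mp hy with ⟨_, h2⟩ | ⟨_, h2⟩
      · exact h2
      · linarith [pow_nonneg' P hnonneg k y s₀]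
    have hdy : d y ≤ k := Nat.find_le h2
    exact ⟨y, h1, by omega⟩
  choose f hf1 hf2 using step
  set g : S → S := fun x => if h : x = s₀ then s₀ else f x h with hgdef
  have hgs : g s₀ = s₀ := by rw [hgdef]; simp
  have hgne : ∀ x (hx : x ≠ s₀), g x = f x hx := by
    intro x hx; rw [hgdef]; simp [hx]
  have hreach : ∀ (n : ℕ) (x : S), d x ≤ n → ∃ k, g^[k] x = s₀ := by
    intro n
    induction n with
    | zero =>
      intro x hx
      exact ⟨0, hd0 x (Nat.le_zero.mp hx)⟩
    | succ n ih =>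
      intro x hx
      by_cases hxs : x = s₀
      · exact ⟨0, hxs⟩
      · have hlt : d (f x hxs) < d x := hf2 x hxs
        obtain ⟨k, hk⟩ := ih (f x hxs) (by omega)
        exact ⟨k + 1, by rw [Function.iterate_succ_apply, hgne x hxs, hk]⟩
  have hWG : IsWGraph s₀ g := by
    refine ⟨hgs, ?_, fun x => hreach (d x) x le_rfl⟩
    intro x hx
    rw [hgne x hx]
    intro hfix
    have := hf2 x hx
    rw [hfix] at this
    omega
  have hwpos : 0 < graphWeight P s₀ g := by
    refine Finset.prod_pos fun x hx => ?_
    have hxne : x ≠ s₀ := Finset.ne_of_mem_erase hx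
    rw [hgne x hxne]
    exact hf1 x hxne
  refine Finset.sum_pos' (fun g' _ => Finset.prod_nonneg fun x _ => hnonneg _ _) ?_
  exact ⟨g, Finset.mem_filter.mpr ⟨Finset.mem_univ _, hWG⟩, hwpos⟩

end FWaux

/-- Freidlin–Wentzell tree formula: for an irreducible stochastic
matrix `P̂` on a finite state space, any stationary distribution `π` satisfies
`π_s = R_s / Σ_{s'} R_{s'}` where `R_s` is the sum over all `{s}`-graphs of the
products of transition probabilities along the arrows. -/
theorem stmt_12
    {S : Type*} [Fintype S] [DecidableEq S] [Nonempty S]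
    (P : Matrix S S ℝ)
    (hnonneg : ∀ s s', 0 ≤ P s s')
    (hrow : ∀ s, ∑ s', P s s' = 1)
    (hirr : ∀ s s', ∃ n : ℕ, 0 < (P ^ n) s s')
    (π : S → ℝ)
    (hπ0 : ∀ s, 0 ≤ π s) (hπ1 : ∑ s, π s = 1)
    (hstat : ∀ s', ∑ s, π s * P s s' = π s') :
    ∀ s, π s = treeSum P s / ∑ s', treeSum P s' := by
  have hRpos : ∀ t, 0 < treeSum P t := fun t => FWaux.treeSum_pos P hnonneg hirr t
  set Z : ℝ := ∑ t, treeSum P t with hZ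
  have hZpos : 0 < Z := Finset.sum_pos (fun t _ => hRpos t) Finset.univ_nonempty
  have hRstat : ∀ t, ∑ x, treeSum P x * P x t = treeSum P t := fun t => by
    rw [FWaux.fw_A P t, ← FWaux.fw_B P hrow t]
  obtain ⟨s₁, -, hmin⟩ := Finset.exists_min_image Finset.univ
    (fun t => π t / treeSum P t) Finset.univ_nonempty
  set c : ℝ := π s₁ / treeSum P s₁ with hc
  set μ : S → ℝ := fun t => π t - c * treeSum P t with hμ
  have hμ0 : ∀ t, 0 ≤ μ t := by
    intro t
    have h1 : c ≤ π t / treeSum P t := hmin t (Finset.mem_univ t)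
    have h2 : c * treeSum P t ≤ π t := (le_div_iff₀ (hRpos t)).mp h1
    simp only [hμ]
    linarith
  have hμs₁ : μ s₁ = 0 := by
    simp only [hμ, hc]
    rw [div_mul_cancel₀ _ (ne_of_gt (hRpos s₁))]
    ring
  have hμstat : ∀ t, ∑ x, μ x * P x t = μ t := by
    intro t
    simp only [hμ, sub_mul, Finset.sum_sub_distrib, mul_assoc]
    rw [hstat, ← Finset.mul_sum, hRstat]
  have hμpow : ∀ (n : ℕ) (t : S), ∑ x, μ x * (P ^ n) x t = μ t := by
    intro n
    induction n with
    | zero =>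
      intro t
      simp [Matrix.one_apply, mul_ite, Finset.sum_ite_eq']
    | succ n ih =>
      intro t
      rw [pow_succ]
      calc ∑ x, μ x * (P ^ n * P) x t
          = ∑ x, ∑ y, μ x * (P ^ n) x y * P y t := by
            refine Finset.sum_congr rfl fun x _ => ?_
            rw [Matrix.mul_apply, Finset.mul_sum]
            exact Finset.sum_congr rfl fun y _ => by ring
        _ = ∑ y, (∑ x, μ x * (P ^ n) x y) * P y t := by
            rw [Finset.sum_comm]
            exact Finset.sum_congr rfl fun y _ => by rw [Finset.sum_mul]
        _ = ∑ y, μ y * P y t := by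
            exact Finset.sum_congr rfl fun y _ => by rw [ih y]
        _ = μ t := hμstat t
  have hμzero : ∀ x, μ x = 0 := by
    intro x
    obtain ⟨n, hn⟩ := hirr x s₁
    have h0 : ∑ y, μ y * (P ^ n) y s₁ = 0 := by rw [hμpow n s₁, hμs₁]
    have hterm := (Finset.sum_eq_zero_iff_of_nonneg
      (fun y _ => mul_nonneg (hμ0 y) (FWaux.pow_nonneg' P hnonneg n y s₁))).mp h0 x
      (Finset.mem_univ x)
    rcases mul_eq_zero.mp hterm with h | h
    · exact h
    · exact absurd h (ne_of_gt hn)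
  have hπR : ∀ x, π x = c * treeSum P x := by
    intro x
    have := hμzero x
    simp only [hμ] at this
    linarith
  have hcZ : c * Z = 1 := by
    rw [hZ, Finset.mul_sum, ← hπ1]
    exact Finset.sum_congr rfl fun x _ => (hπR x).symm
  intro s
  rw [hπR s, eq_div_iff (ne_of_gt hZpos)]
  calc c * treeSum P s * Z = treeSum P s * (c * Z) := by ring
    _ = treeSum P s := by rw [hcZ, mul_one]
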